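/- If B ⊇ C is a Frobenius extension (with Frobenius homomorphism F : B → C and dual bases b_i ∈ B, φ_i ∈ Hom(B_C, C_C)), then a tower A ⊇ B ⊇ C is left relative H-separable (B ⊗_C A ⊕ * ≅ A^n as B-A-bimodules) if and only if it is right relative H-separable (A ⊗_C B ⊕ * ≅ A^n as A-B-bimodules). -/

import Mathlib

/-!  A noncommutative relative tensor product `L ⊗_C R` for a ring `C` mapping
into rings `L` (acting on the right through `f`) and `R` (acting on the left
through `g`), together with the outer left `L`-action `lact`, the outer right
`R`-action `ract`, a lifting principle for balanced biadditive maps, and the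
multiplication map. -/

open scoped TensorProduct

noncomputable section
namespace NCT

variable {C L R : Type*} [Ring C] [Ring L] [Ring R]

/-- The submodule of relations `(l * f c) ⊗ r - l ⊗ (g c * r)`. -/
def rel (f : C →+* L) (g : C →+* R) : Submodule ℤ (L ⊗[ℤ] R) :=
  Submodule.span ℤ
    {x | ∃ (l : L) (c : C) (r : R), x = (l * f c) ⊗ₜ[ℤ] r - l ⊗ₜ[ℤ] (g c * r)}

/-- The relative tensor product `L ⊗_C R`. -/
def Tens (f : C →+* L) (g : C →+* R) : Type _ := (L ⊗[ℤ] R) ⧸ rel f g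

instance (f : C →+* L) (g : C →+* R) : AddCommGroup (Tens f g) :=
  inferInstanceAs (AddCommGroup ((L ⊗[ℤ] R) ⧸ rel f g))

variable (f : C →+* L) (g : C →+* R)

/-- The canonical image of `l ⊗ r` in `L ⊗_C R`. -/
def tmul (l : L) (r : R) : Tens f g := Submodule.Quotient.mk (l ⊗ₜ[ℤ] r)

lemma tmul_rel (l : L) (c : C) (r : R) :
    tmul f g (l * f c) r = tmul f g l (g c * r) := by
  refine (Submodule.Quotient.eq _).2 ?_
  exact Submodule.subset_span ⟨l, c, r, rfl⟩

lemma tmul_add_left (l l' : L) (r : R) :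
    tmul f g (l + l') r = tmul f g l r + tmul f g l' r := by
  show Submodule.Quotient.mk _ = _
  rw [TensorProduct.add_tmul, Submodule.Quotient.mk_add]; rfl

lemma tmul_add_right (l : L) (r r' : R) :
    tmul f g l (r + r') = tmul f g l r + tmul f g l r' := by
  show Submodule.Quotient.mk _ = _
  rw [TensorProduct.tmul_add, Submodule.Quotient.mk_add]; rfl

/-- Package a biadditive map as a bundled `AddMonoidHom`-valued hom. -/
def mkBilin {M N P : Type*} [AddCommGroup M] [AddCommGroup N] [AddCommGroup P]
    (φ : M → N → P)
    (h1 : ∀ m m' n, φ (m + m') n = φ m n + φ m' n)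
    (h2 : ∀ m n n', φ m (n + n') = φ m n + φ m n') : M →+ N →+ P :=
  AddMonoidHom.mk' (fun m => AddMonoidHom.mk' (φ m) (h2 m))
    (fun m m' => by ext n; exact h1 m m' n)

@[simp] lemma mkBilin_apply {M N P : Type*} [AddCommGroup M] [AddCommGroup N] [AddCommGroup P]
    (φ : M → N → P) (h1 h2) (m : M) (n : N) : mkBilin φ h1 h2 m n = φ m n := rfl

/-- Lift a balanced biadditive map to the relative tensor product. -/
def lift {P : Type*} [AddCommGroup P] (φ : L →+ R →+ P)
    (hbal : ∀ l c r, φ (l * f c) r = φ l (g c * r)) : Tens f g →+ P :=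
  (Submodule.liftQ (rel f g)
    (TensorProduct.liftAddHom φ (by
      intro n l r
      simp only [AddMonoidHom.map_zsmul, AddMonoidHom.smul_apply]) ).toIntLinearMap
    (by
      rw [rel, Submodule.span_le]
      rintro x ⟨l, c, r, rfl⟩
      simp only [SetLike.mem_coe, LinearMap.mem_ker, AddMonoidHom.coe_toIntLinearMap,
        map_sub, TensorProduct.liftAddHom_tmul]
      rw [hbal, sub_self])).toAddMonoidHom

@[simp] lemma lift_tmul {P : Type*} [AddCommGroup P] (φ : L →+ R →+ P)
    (hbal : ∀ l c r, φ (l * f c) r = φ l (g c * r)) (l : L) (r : R) :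
    lift f g φ hbal (tmul f g l r) = φ l r := rfl

/-- The outer left action of `L` on `L ⊗_C R`. -/
def lact (l : L) : Tens f g →+ Tens f g :=
  lift f g (mkBilin (fun l' r => tmul f g (l * l') r)
      (fun a b r => by rw [mul_add, tmul_add_left])
      (fun a r s => by rw [tmul_add_right]))
    (fun l' c r => by simp only [mkBilin_apply]; rw [← mul_assoc, tmul_rel])

@[simp] lemma lact_tmul (l l' : L) (r : R) :
    lact f g l (tmul f g l' r) = tmul f g (l * l') r := rfl

/-- The outer right action of `R` on `L ⊗_C R`. -/
def ract (r : R) : Tens f g →+ Tens f g :=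
  lift f g (mkBilin (fun l' r' => tmul f g l' (r' * r))
      (fun a b r' => by rw [tmul_add_left])
      (fun a r' s => by rw [add_mul, tmul_add_right]))
    (fun l' c r' => by simp only [mkBilin_apply]; rw [tmul_rel, mul_assoc])

@[simp] lemma ract_tmul (r r' : R) (l : L) :
    ract f g r (tmul f g l r') = tmul f g l (r' * r) := rfl

/-- The map induced on relative tensor products by a ring map on the left factor. -/
def mapLeft {L' : Type*} [Ring L'] (h : L →+* L') :
    Tens f g →+ Tens (h.comp f) g :=
  lift f g (mkBilin (fun l r => tmul (h.comp f) g (h l) r)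
      (fun a b r => by rw [map_add, tmul_add_left])
      (fun a r s => by rw [tmul_add_right]))
    (fun l c r => by
      simp only [mkBilin_apply, map_mul]
      exact tmul_rel (h.comp f) g (h l) c r)

@[simp] lemma mapLeft_tmul {L' : Type*} [Ring L'] (h : L →+* L') (l : L) (r : R) :
    mapLeft f g h (tmul f g l r) = tmul (h.comp f) g (h l) r := rfl

/-- The multiplication map `L ⊗_C R → R`, `l ⊗ r ↦ jl l * r`, for a ring map
`jl : L → R` compatible with the two maps from `C`. -/
def mulMap (jl : L →+* R) (hcomp : ∀ c, jl (f c) = g c) : Tens f g →+ R :=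
  lift f g (mkBilin (fun l r => jl l * r)
      (fun a b r => by rw [map_add, add_mul])
      (fun a r s => by rw [mul_add]))
    (fun l c r => by simp only [mkBilin_apply]; rw [map_mul, hcomp, mul_assoc])

@[simp] lemma mulMap_tmul (jl : L →+* R) (hcomp : ∀ c, jl (f c) = g c) (l : L) (r : R) :
    mulMap f g jl hcomp (tmul f g l r) = jl l * r := rfl

/-- Induction principle: every element of `L ⊗_C R` is built from `tmul`s. -/
lemma tens_induction {p : Tens f g → Prop} (zero : p 0)
    (tm : ∀ l r, p (tmul f g l r)) (add : ∀ x y, p x → p y → p (x + y)) :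
    ∀ x, p x := by
  intro x
  obtain ⟨y, rfl⟩ := Submodule.Quotient.mk_surjective _ x
  induction y using TensorProduct.induction_on with
  | zero => exact zero
  | tmul l r => exact tm l r
  | add a b ha hb =>
      rw [Submodule.Quotient.mk_add]
      exact add _ _ ha hb

end NCT
end

noncomputable section
open NCT

/-- The tower `A ⊇ B ⊇ C` (given by injective ring maps `ι : C → B`, `j : B → A`) is
*left relative H-separable*: `B ⊗_C A ⊕ * ≅ A^n` as `B`-`A`-bimodules. -/
def LeftRelHSep {C B A : Type*} [Ring C] [Ring B] [Ring A]
    (ι : C →+* B) (j : B →+* A) (n : ℕ) : Prop :=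
  ∃ (i : Tens ι (j.comp ι) →+ (Fin n → A)) (p : (Fin n → A) →+ Tens ι (j.comp ι)),
    (∀ (b : B) x, i (lact ι (j.comp ι) b x) = fun k => j b * i x k) ∧
    (∀ (a : A) x, i (ract ι (j.comp ι) a x) = fun k => i x k * a) ∧
    (∀ (b : B) v, p (fun k => j b * v k) = lact ι (j.comp ι) b (p v)) ∧
    (∀ (a : A) v, p (fun k => v k * a) = ract ι (j.comp ι) a (p v)) ∧
    ∀ x, p (i x) = x

/-- `B` is a *left relative separable extension of `C` in `A`*: the multiplication map
`μ : B ⊗_C A → A` splits as a `B`-`A`-bimodule epimorphism. -/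
def LeftRelSep {C B A : Type*} [Ring C] [Ring B] [Ring A]
    (ι : C →+* B) (j : B →+* A) : Prop :=
  ∃ σ : A →+ Tens ι (j.comp ι),
    (∀ (b : B) (a : A), σ (j b * a) = lact ι (j.comp ι) b (σ a)) ∧
    (∀ (a a' : A), σ (a * a') = ract ι (j.comp ι) a' (σ a)) ∧
    ∀ a, mulMap ι (j.comp ι) j (fun _ => rfl) (σ a) = a

/-- `B ⊇ C` is a separable extension: there is a `B`-central element
`e ∈ B ⊗_C B` with `μ(e) = 1`. -/
def IsSepExt {C B : Type*} [Ring C] [Ring B] (ι : C →+* B) : Prop :=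
  ∃ e : Tens ι ι, (∀ b : B, lact ι ι b e = ract ι ι b e) ∧
    mulMap ι ι (RingHom.id B) (fun _ => rfl) e = 1

/-- The tower `A ⊇ B ⊇ C` is *right relative H-separable*:
`A ⊗_C B ⊕ * ≅ A^n` as `A`-`B`-bimodules. -/
def RightRelHSep {C B A : Type*} [Ring C] [Ring B] [Ring A]
    (ι : C →+* B) (j : B →+* A) (n : ℕ) : Prop :=
  ∃ (i : Tens (j.comp ι) ι →+ (Fin n → A)) (p : (Fin n → A) →+ Tens (j.comp ι) ι),
    (∀ (a : A) x, i (lact (j.comp ι) ι a x) = fun k => a * i x k) ∧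
    (∀ (b : B) x, i (ract (j.comp ι) ι b x) = fun k => i x k * j b) ∧
    (∀ (a : A) v, p (fun k => a * v k) = lact (j.comp ι) ι a (p v)) ∧
    (∀ (b : B) v, p (fun k => v k * j b) = ract (j.comp ι) ι b (p v)) ∧
    ∀ x, p (i x) = x

noncomputable section GenAux
open NCT

namespace NCT

variable {C L R : Type*} [Ring C] [Ring L] [Ring R] (f : C →+* L) (g : C →+* R)

lemma hom_ext' {P : Type*} [AddCommGroup P] {φ ψ : Tens f g →+ P}
    (h : ∀ l r, φ (tmul f g l r) = ψ (tmul f g l r)) : φ = ψ := by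
  ext t
  refine tens_induction f g (p := fun t => φ t = ψ t) ?_ h (fun u v hu hv => ?_) t
  · simp
  · simp [hu, hv]

def tmulL (r : R) : L →+ Tens f g :=
  AddMonoidHom.mk' (fun l => tmul f g l r) (fun a b => tmul_add_left f g a b r)

def tmulR (l : L) : R →+ Tens f g :=
  AddMonoidHom.mk' (fun r => tmul f g l r) (fun a b => tmul_add_right f g l a b)

@[simp] lemma tmulL_apply (r : R) (l : L) : tmulL f g r l = tmul f g l r := rfl
@[simp] lemma tmulR_apply (l : L) (r : R) : tmulR f g l r = tmul f g l r := rfl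

lemma tmul_sum {κ : Type*} (s : Finset κ) (l : L) (r : κ → R) :
    tmul f g l (∑ k ∈ s, r k) = ∑ k ∈ s, tmul f g l (r k) := map_sum (tmulR f g l) r s

lemma sum_tmul {κ : Type*} (s : Finset κ) (l : κ → L) (r : R) :
    tmul f g (∑ k ∈ s, l k) r = ∑ k ∈ s, tmul f g (l k) r := map_sum (tmulL f g r) l s

@[simp] lemma tmul_zero_left (r : R) : tmul f g 0 r = 0 := map_zero (tmulL f g r)
@[simp] lemma tmul_zero_right (l : L) : tmul f g l 0 = 0 := map_zero (tmulR f g l)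

end NCT
end GenAux

noncomputable section FrobAux
open NCT

variable {C B A : Type*} [Ring C] [Ring B] [Ring A]
variable (ι : C →+* B) (j : B →+* A) (F : B →+ C)

section Pairing
variable (hFbil : ∀ (c : C) (b : B) (c' : C), F (ι c * b * ι c') = c * F b * c')

include hFbil

lemma F_mul_left (c : C) (b : B) : F (ι c * b) = c * F b := by
  simpa using hFbil c b 1

lemma F_mul_right (b : B) (c : C) : F (b * ι c) = F b * c := by
  simpa using hFbil 1 b c

/-- Inner part of the pairing `(A ⊗_C B) × (B ⊗_C A) → A`. -/
def pairFun (a : A) (b : B) : Tens ι (j.comp ι) →+ A :=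
  lift ι (j.comp ι)
    (mkBilin (fun b' a' => a * (j.comp ι) (F (b * b')) * a')
      (fun b1 b2 a' => by simp only [mul_add, map_add, add_mul])
      (fun b' a1 a2 => by simp only [mul_add]))
    (fun b' c a' => by
      have h : F (b * (b' * ι c)) = F (b * b') * c := by
        rw [← mul_assoc]; exact F_mul_right ι F hFbil (b * b') c
      simp only [mkBilin_apply, h, map_mul, mul_assoc])

@[simp] lemma pairFun_tmul (a : A) (b b' : B) (a' : A) :
    pairFun ι j F hFbil a b (tmul ι (j.comp ι) b' a')
      = a * (j.comp ι) (F (b * b')) * a' := rfl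

/-- The pairing `(A ⊗_C B) → (B ⊗_C A) →+ A`, `(a ⊗ b, b' ⊗ a') ↦ a·jιF(bb')·a'`. -/
def pairHom : Tens (j.comp ι) ι →+ Tens ι (j.comp ι) →+ A :=
  lift (j.comp ι) ι
    (mkBilin (fun a b => pairFun ι j F hFbil a b)
      (fun a1 a2 b => hom_ext' ι (j.comp ι) fun b' a' => by
        simp [add_mul])
      (fun a b1 b2 => hom_ext' ι (j.comp ι) fun b' a' => by
        simp [add_mul, mul_add]))
    (fun a c b => hom_ext' ι (j.comp ι) fun b' a' => by
      have h : F (ι c * (b * b')) = c * F (b * b') := F_mul_left ι F hFbil c (b * b')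
      simp only [mkBilin_apply, pairFun_tmul, mul_assoc, h, map_mul])

@[simp] lemma pairHom_tmul (a : A) (b : B) :
    pairHom ι j F hFbil (tmul (j.comp ι) ι a b) = pairFun ι j F hFbil a b := rfl

lemma pair_lact (a : A) (t : Tens (j.comp ι) ι) (z : Tens ι (j.comp ι)) :
    pairHom ι j F hFbil (lact (j.comp ι) ι a t) z = a * pairHom ι j F hFbil t z := by
  refine tens_induction (j.comp ι) ι
    (p := fun t => ∀ z, pairHom ι j F hFbil (lact (j.comp ι) ι a t) z
      = a * pairHom ι j F hFbil t z) ?_ ?_ ?_ t z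
  · intro z; simp
  · intro a₀ b₀ z
    refine tens_induction ι (j.comp ι)
      (p := fun z => pairHom ι j F hFbil (lact (j.comp ι) ι a (tmul (j.comp ι) ι a₀ b₀)) z
        = a * pairHom ι j F hFbil (tmul (j.comp ι) ι a₀ b₀) z) ?_ ?_ ?_ z
    · simp
    · intro b' a'; simp [mul_assoc]
    · intro u v hu hv; simp_all [mul_add]
  · intro u v hu hv z
    simp_all [mul_add]

lemma pair_ract_left (b : B) (t : Tens (j.comp ι) ι) (z : Tens ι (j.comp ι)) :
    pairHom ι j F hFbil (ract (j.comp ι) ι b t) z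
      = pairHom ι j F hFbil t (lact ι (j.comp ι) b z) := by
  refine tens_induction (j.comp ι) ι
    (p := fun t => ∀ z, pairHom ι j F hFbil (ract (j.comp ι) ι b t) z
      = pairHom ι j F hFbil t (lact ι (j.comp ι) b z)) ?_ ?_ ?_ t z
  · intro z; simp
  · intro a₀ b₀ z
    refine tens_induction ι (j.comp ι)
      (p := fun z => pairHom ι j F hFbil (ract (j.comp ι) ι b (tmul (j.comp ι) ι a₀ b₀)) z
        = pairHom ι j F hFbil (tmul (j.comp ι) ι a₀ b₀) (lact ι (j.comp ι) b z)) ?_ ?_ ?_ z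
    · simp
    · intro b' a'; simp [mul_assoc]
    · intro u v hu hv; simp_all
  · intro u v hu hv z
    simp_all

lemma pair_ract_right (a : A) (t : Tens (j.comp ι) ι) (z : Tens ι (j.comp ι)) :
    pairHom ι j F hFbil t (ract ι (j.comp ι) a z)
      = pairHom ι j F hFbil t z * a := by
  refine tens_induction (j.comp ι) ι
    (p := fun t => ∀ z, pairHom ι j F hFbil t (ract ι (j.comp ι) a z)
      = pairHom ι j F hFbil t z * a) ?_ ?_ ?_ t z
  · intro z; simp
  · intro a₀ b₀ z
    refine tens_induction ι (j.comp ι)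
      (p := fun z => pairHom ι j F hFbil (tmul (j.comp ι) ι a₀ b₀) (ract ι (j.comp ι) a z)
        = pairHom ι j F hFbil (tmul (j.comp ι) ι a₀ b₀) z * a) ?_ ?_ ?_ z
    · simp
    · intro b' a'; simp [mul_assoc]
    · intro u v hu hv; simp_all [add_mul]
  · intro u v hu hv z
    simp_all [add_mul]

variable (N : ℕ) (x y : Fin N → B)

lemma pair_recover (hdb2 : ∀ b : B, ∑ k, ι (F (b * x k)) * y k = b)
    (t : Tens (j.comp ι) ι) :
    ∑ m, tmul (j.comp ι) ι (pairHom ι j F hFbil t (tmul ι (j.comp ι) (x m) 1)) (y m)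
      = t := by
  refine tens_induction (j.comp ι) ι
    (p := fun t => ∑ m, tmul (j.comp ι) ι
      (pairHom ι j F hFbil t (tmul ι (j.comp ι) (x m) 1)) (y m) = t) ?_ ?_ ?_ t
  · simp
  · intro a b
    calc ∑ m, tmul (j.comp ι) ι
          (pairHom ι j F hFbil (tmul (j.comp ι) ι a b) (tmul ι (j.comp ι) (x m) 1)) (y m)
        = ∑ m, tmul (j.comp ι) ι (a * (j.comp ι) (F (b * x m))) (y m) := by
          simp only [pairHom_tmul, pairFun_tmul, mul_one]
      _ = ∑ m, tmul (j.comp ι) ι a (ι (F (b * x m)) * y m) := by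
          refine Finset.sum_congr rfl fun m _ => ?_
          rw [tmul_rel]
      _ = tmul (j.comp ι) ι a b := by
          rw [← tmul_sum, hdb2]
  · intro u v hu hv
    simp only [map_add, AddMonoidHom.add_apply, tmul_add_left, Finset.sum_add_distrib, hu, hv]

end Pairing

section Copairing
variable (hFbil : ∀ (c : C) (b : B) (c' : C), F (ι c * b * ι c') = c * F b * c')

include hFbil

/-- Inner part of the pairing `(B ⊗_C A) × (A ⊗_C B) → A`. -/
def copairFun (b : B) (a : A) : Tens (j.comp ι) ι →+ A :=
  lift (j.comp ι) ι
    (mkBilin (fun a' b' => a' * (j.comp ι) (F (b' * b)) * a)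
      (fun a1 a2 b' => by simp only [add_mul])
      (fun a' b1 b2 => by simp only [add_mul, map_add, mul_add]))
    (fun a' c b' => by
      have h : F (ι c * (b' * b)) = c * F (b' * b) := F_mul_left ι F hFbil c (b' * b)
      simp only [mkBilin_apply, mul_assoc, h, map_mul])

@[simp] lemma copairFun_tmul (b : B) (a a' : A) (b' : B) :
    copairFun ι j F hFbil b a (tmul (j.comp ι) ι a' b')
      = a' * (j.comp ι) (F (b' * b)) * a := rfl

/-- The pairing `(B ⊗_C A) → (A ⊗_C B) →+ A`, `(b ⊗ a, a' ⊗ b') ↦ a'·jιF(b'b)·a`. -/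
def copairHom : Tens ι (j.comp ι) →+ Tens (j.comp ι) ι →+ A :=
  lift ι (j.comp ι)
    (mkBilin (fun b a => copairFun ι j F hFbil b a)
      (fun b1 b2 a => hom_ext' (j.comp ι) ι fun a' b' => by
        simp [mul_add, add_mul])
      (fun b a1 a2 => hom_ext' (j.comp ι) ι fun a' b' => by
        simp [mul_add]))
    (fun b c a => hom_ext' (j.comp ι) ι fun a' b' => by
      have h : F (b' * (b * ι c)) = F (b' * b) * c := by
        rw [← mul_assoc]; exact F_mul_right ι F hFbil (b' * b) c
      simp only [mkBilin_apply, copairFun_tmul, mul_assoc, h, map_mul])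

@[simp] lemma copairHom_tmul (b : B) (a : A) :
    copairHom ι j F hFbil (tmul ι (j.comp ι) b a) = copairFun ι j F hFbil b a := rfl

lemma copair_lact (b : B) (t : Tens ι (j.comp ι)) (z : Tens (j.comp ι) ι) :
    copairHom ι j F hFbil (lact ι (j.comp ι) b t) z
      = copairHom ι j F hFbil t (ract (j.comp ι) ι b z) := by
  refine tens_induction ι (j.comp ι)
    (p := fun t => ∀ z, copairHom ι j F hFbil (lact ι (j.comp ι) b t) z
      = copairHom ι j F hFbil t (ract (j.comp ι) ι b z)) ?_ ?_ ?_ t z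
  · intro z; simp
  · intro b₀ a₀ z
    refine tens_induction (j.comp ι) ι
      (p := fun z => copairHom ι j F hFbil (lact ι (j.comp ι) b (tmul ι (j.comp ι) b₀ a₀)) z
        = copairHom ι j F hFbil (tmul ι (j.comp ι) b₀ a₀) (ract (j.comp ι) ι b z)) ?_ ?_ ?_ z
    · simp
    · intro a' b'; simp [mul_assoc]
    · intro u v hu hv; simp_all
  · intro u v hu hv z
    simp_all

lemma copair_ract (a : A) (t : Tens ι (j.comp ι)) (z : Tens (j.comp ι) ι) :
    copairHom ι j F hFbil (ract ι (j.comp ι) a t) z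
      = copairHom ι j F hFbil t z * a := by
  refine tens_induction ι (j.comp ι)
    (p := fun t => ∀ z, copairHom ι j F hFbil (ract ι (j.comp ι) a t) z
      = copairHom ι j F hFbil t z * a) ?_ ?_ ?_ t z
  · intro z; simp
  · intro b₀ a₀ z
    refine tens_induction (j.comp ι) ι
      (p := fun z => copairHom ι j F hFbil (ract ι (j.comp ι) a (tmul ι (j.comp ι) b₀ a₀)) z
        = copairHom ι j F hFbil (tmul ι (j.comp ι) b₀ a₀) z * a) ?_ ?_ ?_ z
    · simp
    · intro a' b'; simp [mul_assoc]
    · intro u v hu hv; simp_all [add_mul]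
  · intro u v hu hv z
    simp_all [add_mul]

lemma copair_lact_right (a : A) (t : Tens ι (j.comp ι)) (z : Tens (j.comp ι) ι) :
    copairHom ι j F hFbil t (lact (j.comp ι) ι a z)
      = a * copairHom ι j F hFbil t z := by
  refine tens_induction ι (j.comp ι)
    (p := fun t => ∀ z, copairHom ι j F hFbil t (lact (j.comp ι) ι a z)
      = a * copairHom ι j F hFbil t z) ?_ ?_ ?_ t z
  · intro z; simp
  · intro b₀ a₀ z
    refine tens_induction (j.comp ι) ι
      (p := fun z => copairHom ι j F hFbil (tmul ι (j.comp ι) b₀ a₀) (lact (j.comp ι) ι a z)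
        = a * copairHom ι j F hFbil (tmul ι (j.comp ι) b₀ a₀) z) ?_ ?_ ?_ z
    · simp
    · intro a' b'; simp [mul_assoc]
    · intro u v hu hv; simp_all [mul_add]
  · intro u v hu hv z
    simp_all [mul_add]

variable (N : ℕ) (x y : Fin N → B)

lemma copair_recover (hdb1 : ∀ b : B, ∑ k, x k * ι (F (y k * b)) = b)
    (t : Tens ι (j.comp ι)) :
    ∑ m, tmul ι (j.comp ι) (x m)
      (copairHom ι j F hFbil t (tmul (j.comp ι) ι 1 (y m))) = t := by
  refine tens_induction ι (j.comp ι)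
    (p := fun t => ∑ m, tmul ι (j.comp ι) (x m)
      (copairHom ι j F hFbil t (tmul (j.comp ι) ι 1 (y m))) = t) ?_ ?_ ?_ t
  · simp
  · intro b a
    calc ∑ m, tmul ι (j.comp ι) (x m)
          (copairHom ι j F hFbil (tmul ι (j.comp ι) b a) (tmul (j.comp ι) ι 1 (y m)))
        = ∑ m, tmul ι (j.comp ι) (x m) ((j.comp ι) (F (y m * b)) * a) := by
          simp only [copairHom_tmul, copairFun_tmul, one_mul]
      _ = ∑ m, tmul ι (j.comp ι) (x m * ι (F (y m * b))) a := by
          refine Finset.sum_congr rfl fun m _ => ?_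
          rw [tmul_rel]
      _ = tmul ι (j.comp ι) b a := by
          rw [← sum_tmul, hdb1]
  · intro u v hu hv
    simp only [map_add, AddMonoidHom.add_apply, tmul_add_right, Finset.sum_add_distrib, hu, hv]

end Copairing

section Transfer

@[simp] lemma addMonoidHom_mk'_apply {M N : Type*} [AddGroup M] [AddCommGroup N]
    (f : M → N) (h : ∀ a b, f (a + b) = f a + f b) (a : M) :
    AddMonoidHom.mk' f h a = f a := rfl

lemma pi_single_mul {n : ℕ} (k : Fin n) (a : A) :
    (fun m : Fin n => (Pi.single k (1:A) : Fin n → A) m * a) = Pi.single k a := by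
  funext m
  rcases eq_or_ne m k with h | h
  · subst h; simp
  · simp [Pi.single_eq_of_ne h]

lemma pi_mul_single {n : ℕ} (k : Fin n) (a : A) :
    (fun m : Fin n => a * (Pi.single k (1:A) : Fin n → A) m) = Pi.single k a := by
  funext m
  rcases eq_or_ne m k with h | h
  · subst h; simp
  · simp [Pi.single_eq_of_ne h]

variable (hFbil : ∀ (c : C) (b : B) (c' : C), F (ι c * b * ι c') = c * F b * c')
variable (N : ℕ) (x y : Fin N → B)

include hFbil

lemma leftRelHSep_to_right
    (hdb1 : ∀ b : B, ∑ k, x k * ι (F (y k * b)) = b)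
    (hdb2 : ∀ b : B, ∑ k, ι (F (b * x k)) * y k = b)
    (n : ℕ) (h : LeftRelHSep ι j n) : RightRelHSep ι j n := by
  obtain ⟨i, p, hil, hir, hpl, hpr, hpi⟩ := h
  refine ⟨AddMonoidHom.mk' (fun t k => pairHom ι j F hFbil t (p (Pi.single k 1)))
      (fun t t' => by funext k; simp [map_add]),
    AddMonoidHom.mk' (fun v => ∑ m, tmul (j.comp ι) ι
      (∑ k, v k * i (tmul ι (j.comp ι) (x m) 1) k) (y m))
      (fun v w => by
        simp [Pi.add_apply, add_mul, Finset.sum_add_distrib, tmul_add_left]),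
    ?_, ?_, ?_, ?_, ?_⟩
  · intro a t
    funext k
    exact pair_lact ι j F hFbil a t _
  · intro b t
    funext k
    show pairHom ι j F hFbil (ract (j.comp ι) ι b t) (p (Pi.single k 1))
      = pairHom ι j F hFbil t (p (Pi.single k 1)) * j b
    rw [pair_ract_left]
    have h1 : lact ι (j.comp ι) b (p (Pi.single k 1))
        = ract ι (j.comp ι) (j b) (p (Pi.single k 1)) := by
      calc lact ι (j.comp ι) b (p (Pi.single k 1))
          = p (fun m : Fin n => j b * (Pi.single k (1:A) : Fin n → A) m) := (hpl _ _).symm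
        _ = p (fun m : Fin n => (Pi.single k (1:A) : Fin n → A) m * j b) := by
            rw [pi_mul_single, pi_single_mul]
        _ = ract ι (j.comp ι) (j b) (p (Pi.single k 1)) := hpr _ _
    rw [h1, pair_ract_right]
  · intro a v
    simp only [addMonoidHom_mk'_apply, map_sum, lact_tmul]
    refine Finset.sum_congr rfl fun m _ => ?_
    congr 1
    rw [Finset.mul_sum]
    exact Finset.sum_congr rfl fun k _ => mul_assoc _ _ _
  · intro b v
    simp only [addMonoidHom_mk'_apply, map_sum, ract_tmul]
    have hbx : ∀ (m : Fin N) (k : Fin n),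
        j b * i (tmul ι (j.comp ι) (x m) 1) k
          = ∑ l, i (tmul ι (j.comp ι) (x l) 1) k
              * (j.comp ι) (F (y l * (b * x m))) := by
      intro m k
      have h0 : tmul ι (j.comp ι) (b * x m) 1
          = ∑ l, ract ι (j.comp ι) ((j.comp ι) (F (y l * (b * x m))))
              (tmul ι (j.comp ι) (x l) 1) := by
        conv_lhs => rw [← hdb1 (b * x m)]
        rw [sum_tmul]
        refine Finset.sum_congr rfl fun l _ => ?_
        rw [tmul_rel, ract_tmul, mul_one, one_mul]
      calc j b * i (tmul ι (j.comp ι) (x m) 1) k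
          = i (lact ι (j.comp ι) b (tmul ι (j.comp ι) (x m) 1)) k := by rw [hil]
        _ = i (tmul ι (j.comp ι) (b * x m) 1) k := by rw [lact_tmul]
        _ = ∑ l, i (tmul ι (j.comp ι) (x l) 1) k
              * (j.comp ι) (F (y l * (b * x m))) := by
            rw [h0, map_sum, Finset.sum_apply]
            refine Finset.sum_congr rfl fun l _ => ?_
            exact congrFun (hir _ _) k
    have key : ∀ m : Fin N,
        tmul (j.comp ι) ι (∑ k, v k * j b * i (tmul ι (j.comp ι) (x m) 1) k) (y m)
          = ∑ l, tmul (j.comp ι) ι ((∑ k, v k * i (tmul ι (j.comp ι) (x l) 1) k)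
              * (j.comp ι) (F (y l * (b * x m)))) (y m) := by
      intro m
      rw [← sum_tmul]
      congr 1
      have : ∀ k, v k * j b * i (tmul ι (j.comp ι) (x m) 1) k
          = ∑ l, v k * i (tmul ι (j.comp ι) (x l) 1) k
              * (j.comp ι) (F (y l * (b * x m))) := by
        intro k
        rw [mul_assoc, hbx m k, Finset.mul_sum]
        simp only [mul_assoc]
      rw [Finset.sum_congr rfl fun k _ => this k, Finset.sum_comm]
      exact Finset.sum_congr rfl fun l _ => (Finset.sum_mul _ _ _).symm
    rw [Finset.sum_congr rfl fun m _ => key m, Finset.sum_comm]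
    refine Finset.sum_congr rfl fun l _ => ?_
    calc ∑ m, tmul (j.comp ι) ι ((∑ k, v k * i (tmul ι (j.comp ι) (x l) 1) k)
            * (j.comp ι) (F (y l * (b * x m)))) (y m)
        = ∑ m, tmul (j.comp ι) ι (∑ k, v k * i (tmul ι (j.comp ι) (x l) 1) k)
            (ι (F (y l * b * x m)) * y m) := by
          refine Finset.sum_congr rfl fun m _ => ?_
          rw [tmul_rel, mul_assoc]
      _ = tmul (j.comp ι) ι (∑ k, v k * i (tmul ι (j.comp ι) (x l) 1) k) (y l * b) := by
          rw [← tmul_sum, hdb2 (y l * b)]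
  · intro t
    simp only [addMonoidHom_mk'_apply]
    have hm : ∀ m : Fin N, ∑ k, pairHom ι j F hFbil t (p (Pi.single k 1))
          * i (tmul ι (j.comp ι) (x m) 1) k
        = pairHom ι j F hFbil t (tmul ι (j.comp ι) (x m) 1) := by
      intro m
      calc ∑ k, pairHom ι j F hFbil t (p (Pi.single k 1)) * i (tmul ι (j.comp ι) (x m) 1) k
          = ∑ k, pairHom ι j F hFbil t
              (ract ι (j.comp ι) (i (tmul ι (j.comp ι) (x m) 1) k) (p (Pi.single k 1))) := by
            exact Finset.sum_congr rfl fun k _ => (pair_ract_right ι j F hFbil _ _ _).symm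
        _ = pairHom ι j F hFbil t
            (∑ k, ract ι (j.comp ι) (i (tmul ι (j.comp ι) (x m) 1) k) (p (Pi.single k 1))) := by
            rw [map_sum]
        _ = pairHom ι j F hFbil t (p (i (tmul ι (j.comp ι) (x m) 1))) := by
            congr 1
            calc ∑ k, ract ι (j.comp ι) (i (tmul ι (j.comp ι) (x m) 1) k) (p (Pi.single k 1))
                = ∑ k, p (Pi.single k (i (tmul ι (j.comp ι) (x m) 1) k)) := by
                  refine Finset.sum_congr rfl fun k _ => ?_
                  rw [← hpr (i (tmul ι (j.comp ι) (x m) 1) k) (Pi.single k 1), pi_single_mul]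
              _ = p (∑ k, Pi.single k (i (tmul ι (j.comp ι) (x m) 1) k)) := by rw [map_sum]
              _ = p (i (tmul ι (j.comp ι) (x m) 1)) := by rw [Finset.univ_sum_single]
        _ = pairHom ι j F hFbil t (tmul ι (j.comp ι) (x m) 1) := by rw [hpi]
    rw [Finset.sum_congr rfl fun m _ => by rw [hm m]]
    exact pair_recover ι j F hFbil N x y hdb2 t

lemma rightRelHSep_to_left
    (hdb1 : ∀ b : B, ∑ k, x k * ι (F (y k * b)) = b)
    (hdb2 : ∀ b : B, ∑ k, ι (F (b * x k)) * y k = b)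
    (n : ℕ) (h : RightRelHSep ι j n) : LeftRelHSep ι j n := by
  obtain ⟨i, p, hil, hir, hpl, hpr, hpi⟩ := h
  refine ⟨AddMonoidHom.mk' (fun t k => copairHom ι j F hFbil t (p (Pi.single k 1)))
      (fun t t' => by funext k; simp [map_add]),
    AddMonoidHom.mk' (fun v => ∑ m, tmul ι (j.comp ι) (x m)
      (∑ k, i (tmul (j.comp ι) ι 1 (y m)) k * v k))
      (fun v w => by
        simp [Pi.add_apply, mul_add, Finset.sum_add_distrib, tmul_add_right]),
    ?_, ?_, ?_, ?_, ?_⟩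
  · intro b t
    funext k
    show copairHom ι j F hFbil (lact ι (j.comp ι) b t) (p (Pi.single k 1))
      = j b * copairHom ι j F hFbil t (p (Pi.single k 1))
    rw [copair_lact]
    have h1 : ract (j.comp ι) ι b (p (Pi.single k 1))
        = lact (j.comp ι) ι (j b) (p (Pi.single k 1)) := by
      calc ract (j.comp ι) ι b (p (Pi.single k 1))
          = p (fun m : Fin n => (Pi.single k (1:A) : Fin n → A) m * j b) := (hpr _ _).symm
        _ = p (fun m : Fin n => j b * (Pi.single k (1:A) : Fin n → A) m) := by
            rw [pi_mul_single, pi_single_mul]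
        _ = lact (j.comp ι) ι (j b) (p (Pi.single k 1)) := hpl _ _
    rw [h1, copair_lact_right]
  · intro a t
    funext k
    exact copair_ract ι j F hFbil a t _
  · intro b v
    simp only [addMonoidHom_mk'_apply, map_sum, lact_tmul]
    have hby : ∀ (m : Fin N) (k : Fin n),
        i (tmul (j.comp ι) ι 1 (y m)) k * j b
          = ∑ l, (j.comp ι) (F (y m * b * x l)) * i (tmul (j.comp ι) ι 1 (y l)) k := by
      intro m k
      have h0 : tmul (j.comp ι) ι 1 (y m * b)
          = ∑ l, lact (j.comp ι) ι ((j.comp ι) (F (y m * b * x l)))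
              (tmul (j.comp ι) ι 1 (y l)) := by
        conv_lhs => rw [← hdb2 (y m * b)]
        rw [tmul_sum]
        refine Finset.sum_congr rfl fun l _ => ?_
        rw [lact_tmul, mul_one, ← tmul_rel, one_mul]
      calc i (tmul (j.comp ι) ι 1 (y m)) k * j b
          = i (ract (j.comp ι) ι b (tmul (j.comp ι) ι 1 (y m))) k := by rw [hir]
        _ = i (tmul (j.comp ι) ι 1 (y m * b)) k := by rw [ract_tmul]
        _ = ∑ l, (j.comp ι) (F (y m * b * x l)) * i (tmul (j.comp ι) ι 1 (y l)) k := by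
            rw [h0, map_sum, Finset.sum_apply]
            refine Finset.sum_congr rfl fun l _ => ?_
            exact congrFun (hil _ _) k
    have key : ∀ m : Fin N,
        tmul ι (j.comp ι) (x m) (∑ k, i (tmul (j.comp ι) ι 1 (y m)) k * (j b * v k))
          = ∑ l, tmul ι (j.comp ι) (x m) ((j.comp ι) (F (y m * b * x l))
              * (∑ k, i (tmul (j.comp ι) ι 1 (y l)) k * v k)) := by
      intro m
      rw [← tmul_sum]
      congr 1
      have : ∀ k, i (tmul (j.comp ι) ι 1 (y m)) k * (j b * v k)
          = ∑ l, (j.comp ι) (F (y m * b * x l))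
              * (i (tmul (j.comp ι) ι 1 (y l)) k * v k) := by
        intro k
        rw [← mul_assoc, hby m k, Finset.sum_mul]
        simp only [mul_assoc]
      rw [Finset.sum_congr rfl fun k _ => this k, Finset.sum_comm]
      exact Finset.sum_congr rfl fun l _ => (Finset.mul_sum _ _ _).symm
    rw [Finset.sum_congr rfl fun m _ => key m, Finset.sum_comm]
    refine Finset.sum_congr rfl fun l _ => ?_
    calc ∑ m, tmul ι (j.comp ι) (x m) ((j.comp ι) (F (y m * b * x l))
            * (∑ k, i (tmul (j.comp ι) ι 1 (y l)) k * v k))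
        = ∑ m, tmul ι (j.comp ι) (x m * ι (F (y m * (b * x l))))
            (∑ k, i (tmul (j.comp ι) ι 1 (y l)) k * v k) := by
          refine Finset.sum_congr rfl fun m _ => ?_
          rw [tmul_rel, mul_assoc]
      _ = tmul ι (j.comp ι) (b * x l) (∑ k, i (tmul (j.comp ι) ι 1 (y l)) k * v k) := by
          rw [← sum_tmul, hdb1 (b * x l)]
  · intro a v
    simp only [addMonoidHom_mk'_apply, map_sum, ract_tmul]
    refine Finset.sum_congr rfl fun m _ => ?_
    congr 1
    rw [Finset.sum_mul]
    exact Finset.sum_congr rfl fun k _ => (mul_assoc _ _ _).symm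
  · intro t
    simp only [addMonoidHom_mk'_apply]
    have hm : ∀ m : Fin N, ∑ k, i (tmul (j.comp ι) ι 1 (y m)) k
          * copairHom ι j F hFbil t (p (Pi.single k 1))
        = copairHom ι j F hFbil t (tmul (j.comp ι) ι 1 (y m)) := by
      intro m
      calc ∑ k, i (tmul (j.comp ι) ι 1 (y m)) k * copairHom ι j F hFbil t (p (Pi.single k 1))
          = ∑ k, copairHom ι j F hFbil t
              (lact (j.comp ι) ι (i (tmul (j.comp ι) ι 1 (y m)) k) (p (Pi.single k 1))) := by
            exact Finset.sum_congr rfl fun k _ => (copair_lact_right ι j F hFbil _ _ _).symm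
        _ = copairHom ι j F hFbil t
            (∑ k, lact (j.comp ι) ι (i (tmul (j.comp ι) ι 1 (y m)) k) (p (Pi.single k 1))) := by
            rw [map_sum]
        _ = copairHom ι j F hFbil t (p (i (tmul (j.comp ι) ι 1 (y m)))) := by
            congr 1
            calc ∑ k, lact (j.comp ι) ι (i (tmul (j.comp ι) ι 1 (y m)) k) (p (Pi.single k 1))
                = ∑ k, p (Pi.single k (i (tmul (j.comp ι) ι 1 (y m)) k)) := by
                  refine Finset.sum_congr rfl fun k _ => ?_
                  rw [← hpl (i (tmul (j.comp ι) ι 1 (y m)) k) (Pi.single k 1), pi_mul_single]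
              _ = p (∑ k, Pi.single k (i (tmul (j.comp ι) ι 1 (y m)) k)) := by rw [map_sum]
              _ = p (i (tmul (j.comp ι) ι 1 (y m))) := by rw [Finset.univ_sum_single]
        _ = copairHom ι j F hFbil t (tmul (j.comp ι) ι 1 (y m)) := by rw [hpi]
    rw [Finset.sum_congr rfl fun m _ => by rw [hm m]]
    exact copair_recover ι j F hFbil N x y hdb1 t

end Transfer
end FrobAux

/-- if `B ⊇ C` is a Frobenius extension (with Frobenius homomorphism
`F : B → C` and dual bases `x_i`, `y_i`), then a tower `A ⊇ B ⊇ C` is left relative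
H-separable iff it is right relative H-separable. -/
theorem frobenius_leftRelHSep_iff_rightRelHSep
    {C B A : Type*} [Ring C] [Ring B] [Ring A]
    (ι : C →+* B) (j : B →+* A)
    (hι : Function.Injective ι) (hj : Function.Injective j)
    (F : B →+ C)
    (hFbil : ∀ (c : C) (b : B) (c' : C), F (ι c * b * ι c') = c * F b * c')
    (N : ℕ) (x y : Fin N → B)
    (hdb1 : ∀ b : B, ∑ k, x k * ι (F (y k * b)) = b)
    (hdb2 : ∀ b : B, ∑ k, ι (F (b * x k)) * y k = b) :
    (∃ n, LeftRelHSep ι j n) ↔ (∃ n, RightRelHSep ι j n) := by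
  constructor
  · rintro ⟨n, h⟩
    exact ⟨n, leftRelHSep_to_right ι j F hFbil N x y hdb1 hdb2 n h⟩
  · rintro ⟨n, h⟩
    exact ⟨n, rightRelHSep_to_left ι j F hFbil N x y hdb1 hdb2 n h⟩

end
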